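/- A finite group H is solvable if and only if for every finite perfect group G, the map G → 0 has the left lifting property with respect to H → 0. -/

import Mathlib

/-- Quillen lifting property: `f ⧄ g`. -/
def Lifts {A B X Y : Type*} [Group A] [Group B] [Group X] [Group Y]
    (f : A →* B) (g : X →* Y) : Prop :=
  ∀ (i : A →* X) (j : B →* Y), g.comp i = j.comp f →
    ∃ h : B →* X, h.comp f = i ∧ g.comp h = j

/-- If the commutator subgroup is solvable, so is the group. -/
lemma solvable_of_commutator_solvable {H : Type*} [Group H]
    (h : IsSolvable ↥(commutator H)) : IsSolvable H := by
  have := h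
  refine solvable_of_ker_le_range ((commutator H).subtype) (Abelianization.of (G := H)) ?_ (hG' := h)
  intro x hx
  have hx' : x ∈ commutator H := by
    have : Abelianization.of x = 1 := hx
    exact (QuotientGroup.eq_one_iff x).mp this
  exact ⟨⟨x, hx'⟩, rfl⟩

lemma aux_solvable (N : ℕ) : ∀ (H : Type u) [Group H] [Finite H], Nat.card H ≤ N →
    (∀ (G : Type u) [Group G] [Finite G], commutator G = ⊤ →
      ∀ f : G →* H, f = 1) → IsSolvable H := by
  induction N with
  | zero =>
    intro H _ _ hle _
    have : 0 < Nat.card H := Nat.card_pos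
    omega
  | succ N ih =>
    intro H _ _ hle hyp
    by_cases hc : commutator H = ⊤
    · have := hyp H hc (MonoidHom.id H)
      have hs : Subsingleton H := by
        constructor
        intro a b
        have ha := congrArg (fun f => f a) this
        have hb := congrArg (fun f => f b) this
        simp at ha hb
        rw [ha, hb]
      exact isSolvable_of_comm (fun a b => Subsingleton.elim (h := hs) _ _)
    · refine solvable_of_commutator_solvable ?_
      have hlt : Nat.card ↥(commutator H) < Nat.card H := by
        have hsub : (commutator H : Set H) ⊂ Set.univ := by
          refine ⟨Set.subset_univ _, fun hle => hc ?_⟩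
          rw [eq_top_iff]
          intro x _
          exact hle (Set.mem_univ x)
        calc Nat.card ↥(commutator H) = (commutator H : Set H).ncard :=
              (Nat.card_coe_set_eq _)
          _ < (Set.univ : Set H).ncard := Set.ncard_lt_ncard hsub Set.finite_univ
          _ = Nat.card H := by rw [Set.ncard_univ]
      refine ih _ (by omega) ?_
      intro G _ _ hG f
      have := hyp G hG (((commutator H).subtype).comp f)
      ext x
      have h3 := congrArg (fun g => g x) this
      simp only [MonoidHom.comp_apply, MonoidHom.one_apply] at h3
      simpa using h3

theorem stmt6 {H : Type u} [Group H] [Finite H] :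
    IsSolvable H ↔
      ∀ (G : Type u) [Group G] [Finite G], commutator G = ⊤ →
        Lifts (1 : G →* PUnit) (1 : H →* PUnit) := by
  constructor
  · intro hH G _ _ hG i j _
    obtain ⟨n, hn⟩ := hH.solvable
    have hi : i = 1 := by
      have h1 : ∀ m, derivedSeries G m = ⊤ := by
        intro m
        induction m with
        | zero => exact derivedSeries_zero G
        | succ m ihm =>
          rw [derivedSeries_succ, ihm]
          rw [← derivedSeries_one, derivedSeries_succ, derivedSeries_zero] at hG
          exact hG
      have h2 : (derivedSeries G n).map i ≤ derivedSeries H n :=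
        map_derivedSeries_le_derivedSeries i n
      rw [h1 n, hn] at h2
      ext x
      have : i x ∈ Subgroup.map i ⊤ := ⟨x, trivial, rfl⟩
      simpa using h2 this
    refine ⟨1, ?_, ?_⟩
    · rw [hi]; ext x; rfl
    · ext x
  · intro hyp
    refine aux_solvable (Nat.card H) H le_rfl ?_
    intro G _ _ hG f
    obtain ⟨h, hh1, _⟩ := hyp G hG f 1 (by ext x)
    rw [← hh1]
    ext x
    simp [MonoidHom.comp_apply]
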